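/- For each real number ε > 0 and each integer c ≥ 1, there exist a natural number r and a finite set X ⊆ (ZMod 2)^r with 0 ∉ X, X spanning (ZMod 2)^r, X triangle-free, |X| ≥ (1/4 − ε)·2^r, and critical number χ(X) = c. -/

import Mathlib

/-- `X` is triangle-free: no three pairwise distinct elements of `X` sum to zero. -/
def TriangleFree {n : ℕ} (X : Set (Fin n → ZMod 2)) : Prop :=
  ∀ x ∈ X, ∀ y ∈ X, ∀ z ∈ X, x ≠ y → y ≠ z → x ≠ z → x + y + z ≠ 0

/-- The critical number of `X ⊆ (ZMod 2)^n`: the least `c` such that some linear subspace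
of codimension `c` is disjoint from `X`. -/
noncomputable def critNum {n : ℕ} (X : Set (Fin n → ZMod 2)) : ℕ :=
  sInf {c : ℕ | ∃ W : Submodule (ZMod 2) (Fin n → ZMod 2),
    Module.finrank (ZMod 2) W + c = n ∧ ∀ x ∈ X, x ∉ W}

namespace AuxS1
open Finset

/-- Hamming weight -/
def wt {n : ℕ} (x : Fin n → ZMod 2) : ℕ := ∑ i, (x i).val

lemma val_one2 : (1 : ZMod 2).val = 1 := by decide

lemma wt_add_le {n : ℕ} (x y : Fin n → ZMod 2) : wt (x + y) ≤ wt x + wt y := by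
  unfold wt
  rw [← Finset.sum_add_distrib]
  exact Finset.sum_le_sum fun i _ =>
    (by decide : ∀ a b : ZMod 2, (a+b).val ≤ a.val + b.val) (x i) (y i)

lemma wt_add_add_le {n : ℕ} (x y : Fin n → ZMod 2) :
    wt (x + y) + wt x + wt y ≤ 2 * n := by
  have h : ∀ i : Fin n, ((x i + y i).val + (x i).val) + (y i).val ≤ 2 :=
    fun i => (by decide : ∀ a b : ZMod 2, ((a+b).val + a.val) + b.val ≤ 2) (x i) (y i)
  calc wt (x+y) + wt x + wt y = ∑ i, (((x i + y i).val + (x i).val) + (y i).val) := by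
        simp [wt, Finset.sum_add_distrib]
    _ ≤ ∑ _i : Fin n, 2 := Finset.sum_le_sum fun i _ => h i
    _ = 2 * n := by simp [mul_comm]

lemma wt_le {n : ℕ} (x : Fin n → ZMod 2) : wt x ≤ n := by
  calc wt x ≤ ∑ _i : Fin n, 1 := Finset.sum_le_sum fun i _ =>
        (by decide : ∀ a : ZMod 2, a.val ≤ 1) (x i)
    _ = n := by simp

lemma wt_ones {n : ℕ} : wt (fun _ : Fin n => (1 : ZMod 2)) = n := by simp [wt, val_one2]

lemma wt_zero {n : ℕ} : wt (0 : Fin n → ZMod 2) = 0 := by simp [wt]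

lemma wt_add_ones {n : ℕ} (x : Fin n → ZMod 2) :
    wt (x + fun _ => 1) + wt x = n := by
  have h : ∀ i : Fin n, (x i + 1).val + (x i).val = 1 :=
    fun i => (by decide : ∀ a : ZMod 2, (a + 1).val + a.val = 1) (x i)
  calc wt (x + fun _ => 1) + wt x = ∑ i, ((x i + 1).val + (x i).val) := by
        simp [wt, Finset.sum_add_distrib]
    _ = n := by simp [h]

lemma wt_le_wt_add_single {n : ℕ} (x : Fin n → ZMod 2) (j : Fin n) :
    wt x ≤ wt (x + (Pi.single j 1 : Fin n → ZMod 2)) + 1 := by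
  have h : ∀ i : Fin n, (x i).val ≤ ((x + (Pi.single j 1 : Fin n → ZMod 2)) i).val + (if i = j then 1 else 0) := by
    intro i
    by_cases hij : i = j
    · subst hij
      simp only [Pi.add_apply, Pi.single_eq_same, if_pos rfl]
      exact (by decide : ∀ a : ZMod 2, a.val ≤ (a + 1).val + 1) (x i)
    · simp [Pi.single_apply, hij]
  calc wt x ≤ ∑ i, (((x + (Pi.single j 1 : Fin n → ZMod 2)) i).val + (if i = j then 1 else 0)) :=
        Finset.sum_le_sum fun i _ => h i
    _ = wt (x + (Pi.single j 1 : Fin n → ZMod 2)) + 1 := by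
        rw [Finset.sum_add_distrib]
        simp [wt]

lemma add_self_eq_zero' {n : ℕ} (v : Fin n → ZMod 2) : v + v = 0 := by
  funext i
  exact (by decide : ∀ a : ZMod 2, a + a = 0) (v i)

/- ### central binomial bounds -/

lemma centralBinom_sq_bound : ∀ a : ℕ, (Nat.centralBinom a)^2 * (3*a+1) ≤ 16^a := by
  intro a
  induction a with
  | zero => simp [Nat.centralBinom]
  | succ a ih =>
    have key := Nat.succ_mul_centralBinom_succ a
    have hpos : 0 < (a+1)^2 * (3*a+1) := by positivity
    refine Nat.le_of_mul_le_mul_right ?_ hpos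
    calc Nat.centralBinom (a+1)^2 * (3*(a+1)+1) * ((a+1)^2 * (3*a+1))
        = ((a+1) * Nat.centralBinom (a+1))^2 * ((3*a+4) * (3*a+1)) := by ring
      _ = (2 * (2*a+1) * Nat.centralBinom a)^2 * ((3*a+4) * (3*a+1)) := by rw [key]
      _ = (4 * (2*a+1)^2 * (3*a+4)) * (Nat.centralBinom a^2 * (3*a+1)) := by ring
      _ ≤ (16 * (a+1)^2 * (3*a+1)) * (Nat.centralBinom a^2 * (3*a+1)) := by
          apply Nat.mul_le_mul_right
          nlinarith
      _ ≤ (16 * (a+1)^2 * (3*a+1)) * 16^a := by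
          apply Nat.mul_le_mul_left _ ih
      _ = 16^(a+1) * ((a+1)^2 * (3*a+1)) := by ring

lemma choose_half_sq_bound (m : ℕ) (hm : 1 ≤ m) :
    (m.choose (m/2))^2 * m ≤ 4^m := by
  rcases Nat.even_or_odd m with ⟨a, ha⟩ | ⟨a, ha⟩
  · subst ha
    have h2 : (a + a)/2 = a := by omega
    rw [h2]
    have : (a+a).choose a = Nat.centralBinom a := by rw [Nat.centralBinom]; ring_nf
    rw [this]
    calc Nat.centralBinom a^2 * (a+a) ≤ Nat.centralBinom a^2 * (3*a+1) :=
          Nat.mul_le_mul_left _ (by omega)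
      _ ≤ 16^a := centralBinom_sq_bound a
      _ = 4^(a+a) := by
          rw [show (16:ℕ) = 4^2 by norm_num, ← pow_mul]
          congr 1
          omega
  · subst ha
    have h2 : (2*a+1)/2 = a := by omega
    rw [h2]
    have hdouble : Nat.centralBinom (a+1) = 2 * (2*a+1).choose a := by
      have h1 : Nat.centralBinom (a+1) = (2*a+1).choose a + (2*a+1).choose (a+1) := by
        rw [Nat.centralBinom]
        have : 2*(a+1) = (2*a+1) + 1 := by ring
        rw [this, Nat.choose_succ_succ']
      have h3 : (2*a+1).choose (a+1) = (2*a+1).choose a := by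
        have := Nat.choose_symm (n := 2*a+1) (k := a+1) (by omega)
        simpa [show 2*a+1-(a+1) = a by omega] using this.symm
      omega
    have hcb := centralBinom_sq_bound (a+1)
    rw [hdouble] at hcb
    have : (2 * (2*a+1).choose a)^2 * (3*(a+1)+1) = 4 * ((2*a+1).choose a^2 * (3*a+4)) := by ring
    rw [this] at hcb
    have h16 : (16:ℕ)^(a+1) = 4 * (4 * 16^a) := by ring
    rw [h16] at hcb
    have hc4 : (2*a+1).choose a^2 * (3*a+4) ≤ 4 * 16^a := by omega
    calc (2*a+1).choose a^2 * (2*a+1) ≤ (2*a+1).choose a^2 * (3*a+4) :=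
          Nat.mul_le_mul_left _ (by omega)
      _ ≤ 4 * 16^a := hc4
      _ = 4^(2*a+1) := by
          rw [pow_succ, show (16:ℕ) = 4^2 by norm_num, ← pow_mul]
          ring

/- ### counting vectors by weight -/

lemma wt_eq_card {m : ℕ} (v : Fin m → ZMod 2) :
    wt v = (univ.filter (fun k => v k = 1)).card := by
  rw [Finset.card_filter, wt]
  congr 1
  funext k
  exact (by decide : ∀ a : ZMod 2, a.val = if a = 1 then 1 else 0) (v k)

lemma card_shell (m j : ℕ) :
    ((univ : Finset (Fin m → ZMod 2)).filter (fun v => wt v = j)).card = m.choose j := by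
  have hpc : m.choose j = (Finset.powersetCard j (univ : Finset (Fin m))).card := by
    simp [Finset.card_powersetCard]
  rw [hpc]
  refine Finset.card_bij' (fun v _ => univ.filter (fun k => v k = 1))
    (fun S _ => fun k => if k ∈ S then 1 else 0) ?_ ?_ ?_ ?_
  · intro v hv
    simp only [Finset.mem_filter, Finset.mem_univ, true_and] at hv
    simp [Finset.mem_powersetCard, ← wt_eq_card, hv]
  · intro S hS
    simp only [Finset.mem_powersetCard] at hS
    simp only [Finset.mem_filter, Finset.mem_univ, true_and]
    rw [wt_eq_card, ← hS.2]
    congr 1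
    ext k
    simp only [Finset.mem_filter, Finset.mem_univ, true_and]
    by_cases h : k ∈ S <;> simp [h]
  · intro v hv
    funext k
    by_cases h : v k = 1 <;> simp [h]
    exact ((by decide : ∀ a : ZMod 2, a ≠ 1 → a = 0) (v k) h).symm
  · intro S hS
    ext k
    simp only [Finset.mem_filter, Finset.mem_univ, true_and]
    by_cases h : k ∈ S <;> simp [h]

lemma card_wt_filter_le (m : ℕ) (P : ℕ → Prop) [DecidablePred P] :
    ((univ : Finset (Fin m → ZMod 2)).filter (fun v => P (wt v))).card
      ≤ ((Finset.range (m+1)).filter P).card * m.choose (m/2) := by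
  have hsub : (univ : Finset (Fin m → ZMod 2)).filter (fun v => P (wt v)) ⊆
      ((Finset.range (m+1)).filter P).biUnion
        (fun j => (univ : Finset (Fin m → ZMod 2)).filter (fun v => wt v = j)) := by
    intro v hv
    simp only [Finset.mem_filter, Finset.mem_univ, true_and] at hv
    simp only [Finset.mem_biUnion, Finset.mem_filter, Finset.mem_univ, true_and, Finset.mem_range]
    have hle : wt v ≤ m := wt_le v
    exact ⟨wt v, ⟨by omega, hv⟩, rfl⟩
  calc ((univ : Finset (Fin m → ZMod 2)).filter (fun v => P (wt v))).card
      ≤ _ := Finset.card_le_card hsub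
    _ ≤ ∑ j ∈ (Finset.range (m+1)).filter P,
          ((univ : Finset (Fin m → ZMod 2)).filter (fun v => wt v = j)).card :=
        Finset.card_biUnion_le
    _ ≤ ∑ _j ∈ (Finset.range (m+1)).filter P, m.choose (m/2) := by
        apply Finset.sum_le_sum
        intro j _
        rw [card_shell]
        exact Nat.choose_le_middle j m
    _ = ((Finset.range (m+1)).filter P).card * m.choose (m/2) := by
        rw [Finset.sum_const, smul_eq_mul]

lemma good_count (m d : ℕ) :
    2^m ≤ 2 * ((univ : Finset (Fin m → ZMod 2)).filter
        (fun v => 2*d ≤ wt v ∧ 2*wt v + d + 2 ≤ m)).card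
      + (5*d+2) * m.choose (m/2) := by
  set C := m.choose (m/2) with hC
  set good := (univ : Finset (Fin m → ZMod 2)).filter
      (fun v => 2*d ≤ wt v ∧ 2*wt v + d + 2 ≤ m) with hgood
  set lowf := (univ : Finset (Fin m → ZMod 2)).filter (fun v => wt v < 2*d) with hlow
  set highf := (univ : Finset (Fin m → ZMod 2)).filter (fun v => m < 2*wt v + d + 2) with hhigh
  have htot : (univ : Finset (Fin m → ZMod 2)).card = 2^m := by
    simp [Finset.card_univ]
  have hcover : (univ : Finset (Fin m → ZMod 2)) ⊆ good ∪ lowf ∪ highf := by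
    intro v _
    simp only [hgood, hlow, hhigh, Finset.mem_union, Finset.mem_filter, Finset.mem_univ, true_and]
    omega
  have hcard_cover : 2^m ≤ good.card + lowf.card + highf.card := by
    calc 2^m = (univ : Finset (Fin m → ZMod 2)).card := htot.symm
      _ ≤ (good ∪ lowf ∪ highf).card := Finset.card_le_card hcover
      _ ≤ (good ∪ lowf).card + highf.card := Finset.card_union_le _ _
      _ ≤ good.card + lowf.card + highf.card := by
          have := Finset.card_union_le good lowf
          omega
  have hlowb : lowf.card ≤ 2*d * C := by
    calc lowf.card ≤ ((Finset.range (m+1)).filter (fun j => j < 2*d)).card * C :=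
          card_wt_filter_le m (fun j => j < 2*d)
      _ ≤ 2*d * C := by
          apply Nat.mul_le_mul_right
          calc ((Finset.range (m+1)).filter (fun j => j < 2*d)).card
              ≤ (Finset.range (2*d)).card := by
                apply Finset.card_le_card
                intro j hj
                simp only [Finset.mem_filter, Finset.mem_range] at *
                omega
            _ = 2*d := Finset.card_range _
  have hhighb : 2 * highf.card ≤ 2^m + (d+2) * C := by
    set T := highf.image (fun v => v + (fun _ => (1:ZMod 2))) with hT
    have hinj : Function.Injective (fun v : Fin m → ZMod 2 => v + (fun _ => (1:ZMod 2))) :=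
      fun a b h => by simpa using congrArg (fun w => w + (fun _ : Fin m => (1:ZMod 2))) h
    have hTcard : T.card = highf.card := Finset.card_image_of_injective _ hinj
    have hband : highf ∩ T ⊆ (univ : Finset (Fin m → ZMod 2)).filter
        (fun u => (m < 2*wt u + d + 2) ∧ 2*wt u ≤ m + d + 1) := by
      intro u hu
      simp only [Finset.mem_inter, hT, Finset.mem_image, hhigh, Finset.mem_filter,
        Finset.mem_univ, true_and] at hu
      obtain ⟨hu1, w, hw, hwu⟩ := hu
      simp only [Finset.mem_filter, Finset.mem_univ, true_and]
      have hsum : wt u + wt w = m := by rw [← hwu]; exact wt_add_ones w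
      omega
    have hbandcard : (highf ∩ T).card ≤ (d+2) * C := by
      calc (highf ∩ T).card ≤ _ := Finset.card_le_card hband
        _ ≤ ((Finset.range (m+1)).filter
              (fun j => (m < 2*j + d + 2) ∧ 2*j ≤ m + d + 1)).card * C :=
            card_wt_filter_le m (fun j => (m < 2*j + d + 2) ∧ 2*j ≤ m + d + 1)
        _ ≤ (d+2) * C := by
            apply Nat.mul_le_mul_right
            calc ((Finset.range (m+1)).filter
                  (fun j => (m < 2*j + d + 2) ∧ 2*j ≤ m + d + 1)).card
                ≤ (Finset.Icc ((m-d)/2) ((m-d)/2 + (d+1))).card := by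
                  apply Finset.card_le_card
                  intro j hj
                  simp only [Finset.mem_filter, Finset.mem_range, Finset.mem_Icc] at *
                  omega
              _ = d + 2 := by rw [Nat.card_Icc]; omega
    have hUT : (highf ∪ T).card ≤ 2^m := by
      rw [← htot]; exact Finset.card_le_card (Finset.subset_univ _)
    have := Finset.card_union_add_card_inter highf T
    omega
  have hsplit : (5*d+2)*C = 2*(2*d*C) + (d+2)*C := by ring
  omega

/- ### linear algebra -/

lemma finrank_V (n : ℕ) : Module.finrank (ZMod 2) (Fin n → ZMod 2) = n := by
  simp [Module.finrank_pi]

lemma top_of_singles {n : ℕ} (W : Submodule (ZMod 2) (Fin n → ZMod 2))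
    (h : ∀ j : Fin n, (Pi.single j 1 : Fin n → ZMod 2) ∈ W) : W = ⊤ := by
  rw [eq_top_iff]
  intro x _
  have : x = ∑ j, x j • (Pi.single j 1 : Fin n → ZMod 2) := by
    funext i
    rw [Finset.sum_apply]
    simp [Pi.single_apply]
  rw [this]
  exact Submodule.sum_mem W fun j _ => Submodule.smul_mem W _ (h j)

lemma greedy {n : ℕ} : ∀ (t : ℕ) (W : Submodule (ZMod 2) (Fin n → ZMod 2)),
    n ≤ Module.finrank (ZMod 2) W + t → ∃ w ∈ W, n ≤ wt w + t := by
  intro t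
  induction t with
  | zero =>
    intro W hW
    have hW' : W = ⊤ := by
      apply Submodule.eq_top_of_finrank_eq
      rw [finrank_V]
      have := Submodule.finrank_le W
      rw [finrank_V] at this
      omega
    exact ⟨fun _ => 1, by simp [hW'], by rw [wt_ones]; omega⟩
  | succ t ih =>
    intro W hW
    by_cases htop : ∀ j : Fin n, (Pi.single j 1 : Fin n → ZMod 2) ∈ W
    · refine ⟨fun _ => 1, ?_, by rw [wt_ones]; omega⟩
      rw [top_of_singles W htop]; trivial
    · push_neg at htop
      obtain ⟨j, hj⟩ := htop
      set W' := W ⊔ Submodule.span (ZMod 2) {(Pi.single j 1 : Fin n → ZMod 2)} with hW'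
      have hlt : W < W' := by
        refine lt_of_le_of_ne le_sup_left ?_
        intro heq
        apply hj
        rw [heq]
        exact Submodule.mem_sup_right (Submodule.mem_span_singleton_self _)
      have hrank : Module.finrank (ZMod 2) W < Module.finrank (ZMod 2) W' :=
        Submodule.finrank_lt_finrank_of_lt hlt
      obtain ⟨w', hw', hwt⟩ := ih W' (by omega)
      rw [hW', Submodule.mem_sup] at hw'
      obtain ⟨w, hw, z, hz, hsum⟩ := hw'
      rw [Submodule.mem_span_singleton] at hz
      obtain ⟨a, ha⟩ := hz
      have ha2 := (by decide : ∀ a : ZMod 2, a = 0 ∨ a = 1) a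
      rcases ha2 with rfl | rfl
      · rw [zero_smul] at ha
        rw [← ha, add_zero] at hsum
        subst hsum
        exact ⟨w, hw, by omega⟩
      · rw [one_smul] at ha
        rw [← ha] at hsum
        refine ⟨w, hw, ?_⟩
        have hback : w' + (Pi.single j 1 : Fin n → ZMod 2) = w := by
          rw [← hsum, add_assoc, add_self_eq_zero', add_zero]
        have := wt_le_wt_add_single w' j
        rw [hback] at this
        omega

/- ### the two membership predicates -/

def PY (m d : ℕ) (x : Fin (m+1) → ZMod 2) : Prop :=
  x 0 = 1 ∧ 2*d < wt x ∧ 2*wt x + d + 1 ≤ m+1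

def PZ (m d : ℕ) (x : Fin (m+1) → ZMod 2) : Prop := m+1 ≤ wt x + d

lemma lemA {m d : ℕ} {x y : Fin (m+1) → ZMod 2} (hx : PY m d x) (hy : PY m d y) :
    ¬ PY m d (x+y) ∧ ¬ PZ m d (x+y) := by
  constructor
  · intro h
    have h0 : (x+y) 0 = 0 := by
      have : x 0 + y 0 = 0 := by rw [hx.1, hy.1]; decide
      simpa using this
    rw [h.1] at h0
    exact one_ne_zero h0
  · intro h
    have h1 := wt_add_le x y
    have := hx.2.2; have := hy.2.2
    rw [PZ] at h
    omega

lemma lemB {m d : ℕ} {x y : Fin (m+1) → ZMod 2} (h3d : 3*d + 1 ≤ m+1)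
    (hx : PZ m d x) (hy : PZ m d y) :
    ¬ PY m d (x+y) ∧ ¬ PZ m d (x+y) := by
  have h1 := wt_add_add_le x y
  have h2 := wt_le x
  have h3 := wt_le y
  rw [PZ] at hx hy
  constructor
  · intro h
    have := h.2.1
    omega
  · intro h
    rw [PZ] at h
    omega

lemma third_eq {m : ℕ} {x y z : Fin (m+1) → ZMod 2} (h : x + y + z = 0) : z = x + y := by
  funext i
  have := congrFun h i
  simp only [Pi.add_apply, Pi.zero_apply] at this ⊢
  revert this
  exact (by decide : ∀ a b c : ZMod 2, a + b + c = 0 → c = a + b) (x i) (y i) (z i)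

lemma second_eq {m : ℕ} {x y z : Fin (m+1) → ZMod 2} (h : x + y + z = 0) : y = x + z := by
  have h' : x + z + y = 0 := by rw [← h]; ring
  exact third_eq h'

lemma first_eq {m : ℕ} {x y z : Fin (m+1) → ZMod 2} (h : x + y + z = 0) : x = y + z := by
  have h' : y + z + x = 0 := by rw [← h]; ring
  exact third_eq h'

/- ### indicator vectors and spanning -/

def ind {n : ℕ} (S : Finset (Fin n)) : Fin n → ZMod 2 := fun k => if k ∈ S then 1 else 0

lemma wt_ind {n : ℕ} (S : Finset (Fin n)) : wt (ind S) = S.card := by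
  have h : ∀ k, ((ind S) k).val = if k ∈ S then 1 else 0 := by
    intro k
    by_cases hk : k ∈ S <;> simp [ind, hk, val_one2]
  rw [wt]
  simp only [h]
  rw [Finset.sum_ite_mem, Finset.univ_inter, Finset.sum_const, smul_eq_mul, mul_one]

lemma ind_eq_sum {n : ℕ} (S : Finset (Fin n)) :
    ind S = ∑ j ∈ S, (Pi.single j 1 : Fin n → ZMod 2) := by
  funext k
  rw [Finset.sum_apply, ind]
  have : ∀ j, (Pi.single j 1 : Fin n → ZMod 2) k = if k = j then 1 else 0 := by
    intro j; rw [Pi.single_apply]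
  simp only [this]
  simp [Finset.sum_ite_eq]

lemma span_top (m d : ℕ) (hm : 5*d+5 ≤ m) (X : Set (Fin (m+1) → ZMod 2))
    (hX : ∀ S : Finset (Fin (m+1)), (0 : Fin (m+1)) ∈ S → (2*d + 1 = S.card ∨ 2*d+2 = S.card) →
      ind S ∈ X) :
    Submodule.span (ZMod 2) X = ⊤ := by
  apply top_of_singles
  have key : ∀ i : Fin (m+1), i ≠ 0 →
      (Pi.single i 1 : Fin (m+1) → ZMod 2) ∈ Submodule.span (ZMod 2) X := by
    intro i hi
    obtain ⟨S, hSsub, hScard⟩ := Finset.exists_subset_card_eq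
      (s := (univ.erase 0).erase i) (n := 2*d)
      (by rw [Finset.card_erase_of_mem, Finset.card_erase_of_mem] <;>
          simp [Finset.mem_erase, hi]
          omega)
    have hi0 : i ∉ S := fun h => (Finset.mem_erase.mp (hSsub h)).1 rfl
    have h00 : (0 : Fin (m+1)) ∉ S := fun h =>
      (Finset.mem_erase.mp (Finset.mem_erase.mp (hSsub h)).2).1 rfl
    set A := ind (insert 0 S) with hA
    set B := ind (insert i (insert 0 S)) with hB
    have hAX : A ∈ X := hX _ (Finset.mem_insert_self _ _)
      (Or.inl (by rw [Finset.card_insert_of_notMem h00, hScard]))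
    have hBX : B ∈ X := hX _ (Finset.mem_insert_of_mem (Finset.mem_insert_self _ _))
      (Or.inr (by
        rw [Finset.card_insert_of_notMem, Finset.card_insert_of_notMem h00, hScard]
        simp [Finset.mem_insert, hi, hi0]))
    have hsum : (Pi.single i 1 : Fin (m+1) → ZMod 2) = A + B := by
      funext k
      rw [Pi.single_apply, hA, hB]
      simp only [Pi.add_apply, ind]
      by_cases hk : k = i
      · subst hk
        rw [if_pos rfl, if_neg (by simp [Finset.mem_insert, hi, hi0]),
          if_pos (Finset.mem_insert_self _ _)]
        simp
      · rw [if_neg hk]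
        have : (k ∈ insert i (insert 0 S)) ↔ (k ∈ insert 0 S) := by
          simp [Finset.mem_insert, hk]
        by_cases hk2 : k ∈ insert 0 S
        · rw [if_pos hk2, if_pos (this.mpr hk2)]; decide
        · rw [if_neg hk2, if_neg (fun h => hk2 (this.mp h))]; simp
    rw [hsum]
    exact Submodule.add_mem _ (Submodule.subset_span hAX) (Submodule.subset_span hBX)
  intro j
  by_cases hj : j = 0
  · subst hj
    obtain ⟨S, hSsub, hScard⟩ := Finset.exists_subset_card_eq
      (s := (univ : Finset (Fin (m+1))).erase 0) (n := 2*d)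
      (by rw [Finset.card_erase_of_mem (Finset.mem_univ _)]; simp; omega)
    have h00 : (0 : Fin (m+1)) ∉ S := fun h => (Finset.mem_erase.mp (hSsub h)).1 rfl
    have hAX : ind (insert 0 S) ∈ X := hX _ (Finset.mem_insert_self _ _)
      (Or.inl (by rw [Finset.card_insert_of_notMem h00, hScard]))
    have hsum : ind (insert 0 S) + ∑ j ∈ S, (Pi.single j 1 : Fin (m+1) → ZMod 2)
        = (Pi.single 0 1 : Fin (m+1) → ZMod 2) := by
      rw [ind_eq_sum, Finset.sum_insert h00, add_assoc, add_self_eq_zero', add_zero]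
    rw [← hsum]
    refine Submodule.add_mem _ (Submodule.subset_span hAX) (Submodule.sum_mem _ ?_)
    intro j hj
    exact key j (fun h => h00 (h ▸ hj))
  · exact key j hj

/- ### the avoiding subspace -/

lemma upper_W (n d : ℕ) (hd : d + 1 ≤ n) :
    ∃ W : Submodule (ZMod 2) (Fin n → ZMod 2),
      Module.finrank (ZMod 2) W + (d+1) = n ∧
      ∀ x : Fin n → ZMod 2, x ∈ W → (∀ i : Fin n, (i : ℕ) < d+1 → x i = 0) ∧ wt x + (d+1) ≤ n := by
  set f : Fin (d+1) → Fin n := fun j => ⟨j.val, by omega⟩ with hf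
  have hinj : Function.Injective f := by
    intro a b hab
    have h2 : (f a).val = (f b).val := congrArg Fin.val hab
    exact Fin.ext h2
  set P := LinearMap.funLeft (ZMod 2) (ZMod 2) f with hP
  have hsurj : Function.Surjective P := LinearMap.funLeft_surjective_of_injective _ _ _ hinj
  refine ⟨LinearMap.ker P, ?_, ?_⟩
  · have h1 := LinearMap.finrank_range_add_finrank_ker P
    rw [finrank_V] at h1
    have h2 : LinearMap.range P = ⊤ := LinearMap.range_eq_top.mpr hsurj
    rw [h2] at h1
    have h3 : Module.finrank (ZMod 2) (⊤ : Submodule (ZMod 2) (Fin (d+1) → ZMod 2)) = d + 1 := by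
      rw [finrank_top, finrank_V]
    rw [h3] at h1
    omega
  · intro x hx
    have hzero : ∀ i : Fin n, (i : ℕ) < d+1 → x i = 0 := by
      intro i hi
      have := congrFun (LinearMap.mem_ker.mp hx) ⟨i.val, hi⟩
      simpa [hP, LinearMap.funLeft, hf] using this
    refine ⟨hzero, ?_⟩
    set T : Finset (Fin n) := Finset.image f univ with hT
    have hTcard : T.card = d + 1 := by
      rw [hT, Finset.card_image_of_injective _ hinj, Finset.card_univ, Fintype.card_fin]
    have hzT : ∀ i ∈ T, (x i).val = 0 := by
      intro i hi
      rw [hT, Finset.mem_image] at hi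
      obtain ⟨j, _, rfl⟩ := hi
      rw [hzero (f j) (by simp [hf]; have := j.isLt; omega)]
      rfl
    have hsplit : ∑ i ∈ univ \ T, (x i).val + ∑ i ∈ T, (x i).val = wt x :=
      Finset.sum_sdiff (Finset.subset_univ T)
    have hzsum : ∑ i ∈ T, (x i).val = 0 := Finset.sum_eq_zero hzT
    have hbound : ∑ i ∈ univ \ T, (x i).val ≤ (univ \ T).card := by
      apply Finset.sum_le_card_nsmul (univ \ T) _ 1 ?_ |>.trans
      · simp
      · intro i _
        exact (by decide : ∀ a : ZMod 2, a.val ≤ 1) (x i)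
    have hcard : (univ \ T).card = n - (d+1) := by
      rw [Finset.card_sdiff_of_subset (Finset.subset_univ T), hTcard, Finset.card_univ, Fintype.card_fin]
    omega

/- ### cardinality of the Y part -/

lemma wt_cons (m : ℕ) (a : ZMod 2) (v : Fin m → ZMod 2) :
    wt (Fin.cons a v : Fin (m+1) → ZMod 2) = a.val + wt v := by
  rw [wt, Fin.sum_univ_succ]
  simp [wt, Fin.cons_succ]

lemma card_Y_eq (m d : ℕ) :
    ((univ : Finset (Fin (m+1) → ZMod 2)).filter
      (fun x => x 0 = 1 ∧ 2*d < wt x ∧ 2*wt x + d + 1 ≤ m+1)).card =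
    ((univ : Finset (Fin m → ZMod 2)).filter
      (fun v => 2*d ≤ wt v ∧ 2*wt v + d + 2 ≤ m)).card := by
  symm
  refine Finset.card_bij' (fun v _ => Fin.cons 1 v) (fun x _ => Fin.tail x) ?_ ?_ ?_ ?_
  · intro v hv
    simp only [Finset.mem_filter, Finset.mem_univ, true_and] at hv ⊢
    rw [wt_cons, Fin.cons_zero, val_one2]
    refine ⟨rfl, by omega, by omega⟩
  · intro x hx
    simp only [Finset.mem_filter, Finset.mem_univ, true_and] at hx ⊢
    have hxc : wt x = 1 + wt (Fin.tail x) := by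
      conv_lhs => rw [← Fin.cons_self_tail x]
      rw [wt_cons, hx.1, val_one2]
    omega
  · intro v _
    exact Fin.tail_cons _ _
  · intro x hx
    simp only [Finset.mem_filter, Finset.mem_univ, true_and] at hx
    show Fin.cons 1 (Fin.tail x) = x
    rw [← hx.1]
    exact Fin.cons_self_tail x

end AuxS1

theorem stmt_1 (ε : ℝ) (hε : 0 < ε) (c : ℤ) (hc : 1 ≤ c) :
    ∃ (r : ℕ) (X : Set (Fin r → ZMod 2)),
      (0 : Fin r → ZMod 2) ∉ X ∧
      Submodule.span (ZMod 2) X = ⊤ ∧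
      TriangleFree X ∧
      ((1 / 4 : ℝ) - ε) * 2 ^ r ≤ (X.ncard : ℝ) ∧
      (critNum X : ℤ) = c := by
  classical
  open Finset AuxS1 in
  obtain ⟨d, hd⟩ : ∃ d : ℕ, c = (d : ℤ) + 1 := ⟨(c-1).toNat, by omega⟩
  set m := max (5*d+5) (⌈((5*(d:ℝ)+2)/(4*ε))^2⌉₊ + 1) with hmdef
  have hm1 : 5*d+5 ≤ m := le_max_left _ _
  have hm2 : ((5*(d:ℝ)+2)/(4*ε))^2 < (m:ℝ) := by
    have h1 : (⌈((5*(d:ℝ)+2)/(4*ε))^2⌉₊ + 1 : ℕ) ≤ m := le_max_right _ _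
    have h2 := Nat.le_ceil (((5*(d:ℝ)+2)/(4*ε))^2)
    have h3 : ((⌈((5*(d:ℝ)+2)/(4*ε))^2⌉₊ : ℝ) + 1) ≤ (m:ℝ) := by exact_mod_cast h1
    linarith
  set Yfin := (univ : Finset (Fin (m+1) → ZMod 2)).filter
      (fun x => x 0 = 1 ∧ 2*d < wt x ∧ 2*wt x + d + 1 ≤ m+1) with hYdef
  set Zfin := (univ : Finset (Fin (m+1) → ZMod 2)).filter
      (fun x => m+1 ≤ wt x + d) with hZdef
  set X : Set (Fin (m+1) → ZMod 2) := ↑(Yfin ∪ Zfin) with hXdef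
  have hmemX : ∀ x, x ∈ X ↔ PY m d x ∨ PZ m d x := by
    intro x
    simp only [hXdef, Finset.coe_union, Set.mem_union, Finset.mem_coe, hYdef, hZdef,
      Finset.mem_filter, Finset.mem_univ, true_and, PY, PZ]
  refine ⟨m+1, X, ?_, ?_, ?_, ?_, ?_⟩
  -- 0 ∉ X
  · intro h0
    rw [hmemX] at h0
    rcases h0 with h | h
    · exact one_ne_zero (h.1.symm.trans (by simp))
    · rw [PZ, wt_zero] at h
      omega
  -- span
  · apply span_top m d hm1
    intro S h0S hScard
    rw [hmemX]
    left
    refine ⟨by rw [ind]; simp [h0S], ?_, ?_⟩ <;> rw [wt_ind] <;> omega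
  -- triangle-free
  · intro x hx y hy z hz hxy hyz hxz h0
    rw [hmemX] at hx hy hz
    have h3d : 3*d+1 ≤ m+1 := by omega
    rcases hx with hx | hx <;> rcases hy with hy | hy <;> rcases hz with hz | hz
    · exact (lemA hx hy).1 (third_eq h0 ▸ hz)
    · exact (lemA hx hy).2 (third_eq h0 ▸ hz)
    · exact (lemA hx hz).2 (second_eq h0 ▸ hy)
    · exact (lemB h3d hy hz).1 (first_eq h0 ▸ hx)
    · exact (lemA hy hz).2 (first_eq h0 ▸ hx)
    · exact (lemB h3d hx hz).1 (second_eq h0 ▸ hy)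
    · exact (lemB h3d hx hy).1 (third_eq h0 ▸ hz)
    · exact (lemB h3d hx hy).2 (third_eq h0 ▸ hz)
  -- density
  · have hcard : X.ncard = (Yfin ∪ Zfin).card := Set.ncard_coe_finset _
    have hYle : Yfin.card ≤ X.ncard := by
      rw [hcard]
      exact Finset.card_le_card Finset.subset_union_left
    set G := ((univ : Finset (Fin m → ZMod 2)).filter
      (fun v => 2*d ≤ wt v ∧ 2*wt v + d + 2 ≤ m)).card with hGdef
    have hYG : Yfin.card = G := card_Y_eq m d
    set C := m.choose (m/2) with hCdef
    have hgc : 2^m ≤ 2 * G + (5*d+2) * C := good_count m d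
    have hsq : C^2 * m ≤ 4^m := choose_half_sq_bound m (by omega)
    -- real arithmetic
    have hCpos : 0 < (C:ℝ) := by
      have : 0 < C := Nat.choose_pos (Nat.div_le_self m 2)
      exact_mod_cast this
    have hA2 : (5*(d:ℝ)+2)^2 < (m:ℝ) * (4*ε)^2 := by
      have h4e : (0:ℝ) < (4*ε)^2 := by positivity
      have hm2' : ((5*(d:ℝ)+2)^2) / ((4*ε)^2) < (m:ℝ) := by
        rw [← div_pow]
        exact hm2
      have := (div_lt_iff₀ h4e).mp hm2'
      linarith
    have hsqR : (C:ℝ)^2 * (m:ℝ) ≤ 4^m := by exact_mod_cast hsq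
    have hkey : (5*(d:ℝ)+2) * C ≤ 4*ε*2^m := by
      have h4m : ((2:ℝ)^m)^2 = 4^m := by
        rw [← pow_mul, mul_comm, pow_mul]
        norm_num
      have hsq2 : ((5*(d:ℝ)+2) * C)^2 < (4*ε*2^m)^2 := by
        have e1 : ((5*(d:ℝ)+2) * C)^2 = (5*(d:ℝ)+2)^2 * (C:ℝ)^2 := by ring
        have e2 : (4*ε*(2:ℝ)^m)^2 = (4*ε)^2 * ((2:ℝ)^m)^2 := by ring
        rw [e1, e2, h4m]
        calc (5*(d:ℝ)+2)^2 * (C:ℝ)^2 < ((m:ℝ) * (4*ε)^2) * (C:ℝ)^2 := by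
              apply mul_lt_mul_of_pos_right hA2 (by positivity)
          _ = (4*ε)^2 * ((C:ℝ)^2 * (m:ℝ)) := by ring
          _ ≤ (4*ε)^2 * 4^m := by
              apply mul_le_mul_of_nonneg_left hsqR (by positivity)
      have hnn1 : (0:ℝ) ≤ (5*(d:ℝ)+2) * C := by positivity
      have hnn2 : (0:ℝ) ≤ 4*ε*2^m := by positivity
      nlinarith [hsq2, hnn1, hnn2]
    have hgcR : (2:ℝ)^m ≤ 2 * (G:ℝ) + (5*(d:ℝ)+2) * C := by exact_mod_cast hgc
    have hXG : (G:ℝ) ≤ (X.ncard : ℝ) := by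
      have : G ≤ X.ncard := hYG ▸ hYle
      exact_mod_cast this
    have hpow : (2:ℝ)^(m+1) = 2 * 2^m := by ring
    rw [hpow]
    have : (1/4 - ε) * (2 * 2^m) = (1/2)*2^m - 2*ε*2^m := by ring
    rw [this]
    linarith
  -- critical number
  · have hupper : (d+1) ∈ {t : ℕ | ∃ W : Submodule (ZMod 2) (Fin (m+1) → ZMod 2),
        Module.finrank (ZMod 2) W + t = m+1 ∧ ∀ x ∈ X, x ∉ W} := by
      obtain ⟨W, hWr, hWprop⟩ := upper_W (m+1) d (by omega)
      refine ⟨W, hWr, ?_⟩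
      intro x hxX hxW
      obtain ⟨hz, hwt⟩ := hWprop x hxW
      rw [hmemX] at hxX
      rcases hxX with h | h
      · have h0 : x 0 = 0 := hz 0 (by simp)
        rw [h.1] at h0
        exact one_ne_zero h0
      · rw [PZ] at h
        omega
    have hlower : ∀ t ∈ {t : ℕ | ∃ W : Submodule (ZMod 2) (Fin (m+1) → ZMod 2),
        Module.finrank (ZMod 2) W + t = m+1 ∧ ∀ x ∈ X, x ∉ W}, d+1 ≤ t := by
      rintro t ⟨W, hWr, hdisj⟩
      by_contra hlt
      push_neg at hlt
      obtain ⟨w, hwW, hwt⟩ := greedy t W (by omega)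
      have hwX : w ∈ X := by
        rw [hmemX]
        right
        rw [PZ]
        omega
      exact hdisj w hwX hwW
    have hcn : critNum X = d + 1 := by
      rw [critNum]
      exact le_antisymm (Nat.sInf_le hupper) (le_csInf ⟨_, hupper⟩ hlower)
    rw [hcn]
    omega
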